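/- For integers q ≥ 2 and k ≥ 0, setting l_{q,k} = 1/(q(qk+q-1)), the interval I_{q,k} = [1/q + l_{q,k+1}, 1/q + l_{q,k}] has length l_{q,k} - l_{q,k+1} = q^2 · l_{q,k} · l_{q,k+1}, and its Minkowski measure is μ(I_{q,k}) = 2^{-q-k}. -/

import Mathlib

open MeasureTheory
open scoped ENNReal

private lemma Qinv (Q : ℝ → ℝ) (hQ1 : Q 1 = 1)
    (hQM1 : ∀ x ∈ Set.Icc (0 : ℝ) 1, Q (x / (1 + x)) = Q x / 2) :
    ∀ n : ℕ, Q (1 / ((n : ℝ) + 1)) = (1 / 2) ^ n := by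
  intro n
  induction n with
  | zero => simpa using hQ1
  | succ n ih =>
    have hpos : (0:ℝ) < (n:ℝ) + 1 := by positivity
    have hx : (1:ℝ) / ((n:ℝ)+1) ∈ Set.Icc (0:ℝ) 1 := by
      constructor
      · positivity
      · rw [div_le_one hpos]; linarith [Nat.cast_nonneg (α := ℝ) n]
    have key : (1:ℝ) / ((n:ℝ) + 1 + 1) = (1/((n:ℝ)+1)) / (1 + 1/((n:ℝ)+1)) := by
      field_simp
    rw [Nat.cast_succ, key, hQM1 _ hx, ih]
    ring

private lemma Qfrac (Q : ℝ → ℝ) (hQ1 : Q 1 = 1)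
    (hQM1 : ∀ x ∈ Set.Icc (0 : ℝ) 1, Q (x / (1 + x)) = Q x / 2)
    (hQM2 : ∀ x ∈ Set.Icc (0 : ℝ) 1, Q (1 / (2 - x)) = (Q x + 1) / 2) :
    ∀ m k : ℕ, Q (((k:ℝ) + 1) / (((m:ℝ) + 2) * k + (m:ℝ) + 1))
      = (1/2) ^ (m+1) * (1 + (1/2:ℝ) ^ k) := by
  intro m
  induction m with
  | zero =>
    intro k
    have hpos : (0:ℝ) < (k:ℝ) + 1 := by positivity
    have hx : (1:ℝ) / ((k:ℝ)+1) ∈ Set.Icc (0:ℝ) 1 := by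
      constructor
      · positivity
      · rw [div_le_one hpos]; linarith [Nat.cast_nonneg (α := ℝ) k]
    have h2pos : (0:ℝ) < 2 - 1/((k:ℝ)+1) := by
      have : 1/((k:ℝ)+1) ≤ 1 := by
        rw [div_le_one hpos]; linarith [Nat.cast_nonneg (α := ℝ) k]
      linarith
    have key : ((k:ℝ) + 1) / (((0:ℝ) + 2) * k + (0:ℝ) + 1)
        = 1 / (2 - 1/((k:ℝ)+1)) := by
      rw [div_eq_div_iff (by positivity) h2pos.ne']
      field_simp
      ring
    push_cast
    rw [key, hQM2 _ hx, Qinv Q hQ1 hQM1 k]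
    ring
  | succ m ih =>
    intro k
    have hk0 : (0:ℝ) ≤ (k:ℝ) := Nat.cast_nonneg k
    have hm0 : (0:ℝ) ≤ (m:ℝ) := Nat.cast_nonneg m
    have hdpos : (0:ℝ) < ((m:ℝ) + 2) * k + (m:ℝ) + 1 := by positivity
    set x : ℝ := ((k:ℝ) + 1) / (((m:ℝ) + 2) * k + (m:ℝ) + 1) with hxdef
    have hx : x ∈ Set.Icc (0:ℝ) 1 := by
      constructor
      · positivity
      · rw [hxdef, div_le_one hdpos]; nlinarith
    have key : ((k:ℝ) + 1) / (((m:ℝ) + 1 + 2) * k + ((m:ℝ) + 1) + 1)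
        = x / (1 + x) := by
      rw [hxdef]
      rw [div_eq_div_iff (by positivity) (by positivity)]
      field_simp
      ring_nf
    push_cast
    rw [key, hQM1 _ hx, ih k]
    ring

private lemma measure_Icc_of_dist (μ : Measure ℝ) [IsProbabilityMeasure μ] (Q : ℝ → ℝ)
    (hQcont : ContinuousOn Q (Set.Icc 0 1)) (hQmono : MonotoneOn Q (Set.Icc 0 1))
    (hQ0 : Q 0 = 0)
    (hdist : ∀ x ∈ Set.Icc (0 : ℝ) 1, μ (Set.Icc 0 x) = ENNReal.ofReal (Q x))
    (a b : ℝ) (ha : 0 < a) (hab : a ≤ b) (hb : b ≤ 1) :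
    μ (Set.Icc a b) = ENNReal.ofReal (Q b - Q a) := by
  have haI : a ∈ Set.Icc (0:ℝ) 1 := ⟨ha.le, hab.trans hb⟩
  have hbI : b ∈ Set.Icc (0:ℝ) 1 := ⟨ha.le.trans hab, hb⟩
  -- general Ioc formula
  have hIoc : ∀ x y : ℝ, 0 ≤ x → x ≤ y → y ≤ 1 →
      μ (Set.Ioc x y) = ENNReal.ofReal (Q y - Q x) := by
    intro x y hx hxy hy1
    have hxI : x ∈ Set.Icc (0:ℝ) 1 := ⟨hx, hxy.trans hy1⟩
    have hyI : y ∈ Set.Icc (0:ℝ) 1 := ⟨hx.trans hxy, hy1⟩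
    have hset : Set.Icc (0:ℝ) y \ Set.Icc 0 x = Set.Ioc x y := by
      ext t
      simp only [Set.mem_diff, Set.mem_Icc, Set.mem_Ioc, not_and, not_le]
      constructor
      · rintro ⟨⟨ht0, hty⟩, h⟩; exact ⟨h ht0, hty⟩
      · rintro ⟨hxt, hty⟩; exact ⟨⟨hx.trans hxt.le, hty⟩, fun _ => hxt⟩
    have hsub : Set.Icc (0:ℝ) x ⊆ Set.Icc 0 y := Set.Icc_subset_Icc le_rfl hxy
    have hQx0 : 0 ≤ Q x := by
      rw [← hQ0]; exact hQmono ⟨le_rfl, zero_le_one⟩ hxI hx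
    rw [← hset, measure_diff hsub measurableSet_Icc.nullMeasurableSet
        (measure_ne_top μ _), hdist x hxI, hdist y hyI,
      ← ENNReal.ofReal_sub _ hQx0]
  -- atom at a is null
  have hatom : μ {a} = 0 := by
    refine le_antisymm (ENNReal.le_of_forall_pos_le_add fun ε hε _ => ?_) (by positivity)
    rw [zero_add]
    have hc := (Metric.continuousWithinAt_iff).1 (hQcont a haI) ε (by exact_mod_cast hε)
    obtain ⟨δ, hδ, hδc⟩ := hc
    set x : ℝ := max 0 (a - δ/2) with hxdef
    have hx0 : 0 ≤ x := le_max_left _ _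
    have hxa : x < a := by
      rw [hxdef, max_lt_iff]; exact ⟨ha, by linarith⟩
    have hxI : x ∈ Set.Icc (0:ℝ) 1 := ⟨hx0, hxa.le.trans (hab.trans hb)⟩
    have hdxa : dist x a < δ := by
      rw [Real.dist_eq, abs_lt]
      constructor
      · have : a - δ/2 ≤ x := le_max_right _ _
        linarith
      · linarith
    have hQxa : Q a - Q x < ε := by
      have := hδc hxI hdxa
      rw [Real.dist_eq, abs_lt] at this
      linarith [this.1]
    calc μ {a} ≤ μ (Set.Ioc x a) := measure_mono (by
          intro t ht; rw [Set.mem_singleton_iff] at ht; subst ht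
          exact ⟨hxa, le_rfl⟩)
      _ = ENNReal.ofReal (Q a - Q x) := hIoc x a hx0 hxa.le (hab.trans hb)
      _ ≤ (ε : ℝ≥0∞) := by
          rw [← ENNReal.ofReal_coe_nnreal]
          exact ENNReal.ofReal_le_ofReal hQxa.le
  -- conclude
  have hsplit : Set.Icc a b = {a} ∪ Set.Ioc a b := by
    ext t
    simp only [Set.mem_Icc, Set.mem_union, Set.mem_singleton_iff, Set.mem_Ioc]
    constructor
    · rintro ⟨hat, htb⟩
      rcases eq_or_lt_of_le hat with h | h
      · exact Or.inl h.symm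
      · exact Or.inr ⟨h, htb⟩
    · rintro (rfl | ⟨h1, h2⟩)
      · exact ⟨le_rfl, hab⟩
      · exact ⟨h1.le, h2⟩
  have h1 : μ (Set.Icc a b) ≤ μ (Set.Ioc a b) := by
    rw [hsplit]
    calc μ ({a} ∪ Set.Ioc a b) ≤ μ {a} + μ (Set.Ioc a b) := measure_union_le _ _
      _ = μ (Set.Ioc a b) := by rw [hatom, zero_add]
  have h2 : μ (Set.Ioc a b) ≤ μ (Set.Icc a b) := measure_mono Set.Ioc_subset_Icc_self
  rw [le_antisymm h1 h2, hIoc a b ha.le hab hb]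

theorem interval_Iqk_length_and_measure
    (μ : Measure ℝ) [IsProbabilityMeasure μ] (hμsupp : μ (Set.Icc (0 : ℝ) 1) = 1)
    (Q : ℝ → ℝ)
    (hQcont : ContinuousOn Q (Set.Icc 0 1)) (hQmono : MonotoneOn Q (Set.Icc 0 1))
    (hQ0 : Q 0 = 0) (hQ1 : Q 1 = 1)
    (hQM1 : ∀ x ∈ Set.Icc (0 : ℝ) 1, Q (x / (1 + x)) = Q x / 2)
    (hQM2 : ∀ x ∈ Set.Icc (0 : ℝ) 1, Q (1 / (2 - x)) = (Q x + 1) / 2)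
    (hdist : ∀ x ∈ Set.Icc (0 : ℝ) 1, μ (Set.Icc 0 x) = ENNReal.ofReal (Q x))
    (q k : ℕ) (hq : 2 ≤ q)
    (l : ℕ → ℕ → ℝ) (hl : ∀ q' k' : ℕ, l q' k' = 1 / (q' * ((q' : ℝ) * k' + q' - 1))) :
    (1 / (q : ℝ) + l q k) - (1 / (q : ℝ) + l q (k + 1)) =
        l q k - l q (k + 1) ∧
    l q k - l q (k + 1) = (q : ℝ) ^ 2 * l q k * l q (k + 1) ∧
    μ (Set.Icc (1 / (q : ℝ) + l q (k + 1)) (1 / (q : ℝ) + l q k)) =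
      (1 / 2 : ℝ≥0∞) ^ (q + k) := by
  obtain ⟨m, rfl⟩ : ∃ m, q = m + 2 := ⟨q - 2, by omega⟩
  have hk0 : (0:ℝ) ≤ (k:ℝ) := Nat.cast_nonneg k
  have hm0 : (0:ℝ) ≤ (m:ℝ) := Nat.cast_nonneg m
  have hqR : ((m + 2 : ℕ) : ℝ) = (m:ℝ) + 2 := by push_cast; ring
  have hD1 : (0:ℝ) < ((m:ℝ)+2) * k + ((m:ℝ)+2) - 1 := by nlinarith
  have hD2 : (0:ℝ) < ((m:ℝ)+2) * (k+1) + ((m:ℝ)+2) - 1 := by nlinarith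
  have hlk : l (m+2) k = 1 / (((m:ℝ)+2) * (((m:ℝ)+2) * k + ((m:ℝ)+2) - 1)) := by
    rw [hl]; push_cast; ring
  have hlk1 : l (m+2) (k+1) = 1 / (((m:ℝ)+2) * (((m:ℝ)+2) * (k+1) + ((m:ℝ)+2) - 1)) := by
    rw [hl]; push_cast; ring
  refine ⟨by ring, ?_, ?_⟩
  · rw [hlk, hlk1]
    rw [show ((m:ℝ)+2) * k + ((m:ℝ)+2) - 1 = ((m:ℝ)+2) * k + (m:ℝ) + 1 by ring,
      show ((m:ℝ)+2) * (k+1) + ((m:ℝ)+2) - 1 = ((m:ℝ)+2) * (k+1) + (m:ℝ) + 1 by ring, hqR]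
    field_simp
    ring
  · -- endpoints as fractions
    have hb : 1 / ((m + 2 : ℕ) : ℝ) + l (m+2) k
        = ((k:ℝ) + 1) / (((m:ℝ) + 2) * k + (m:ℝ) + 1) := by
      rw [hlk, hqR]
      have h3 : (0:ℝ) < ((m:ℝ)+2) * k + (m:ℝ) + 1 := by nlinarith
      rw [show ((m:ℝ)+2) * k + ((m:ℝ)+2) - 1 = ((m:ℝ)+2) * k + (m:ℝ) + 1 by ring]
      field_simp
      ring
    have ha : 1 / ((m + 2 : ℕ) : ℝ) + l (m+2) (k+1)
        = (((k+1:ℕ):ℝ) + 1) / (((m:ℝ) + 2) * ((k+1:ℕ):ℝ) + (m:ℝ) + 1) := by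
      rw [hlk1, hqR]
      push_cast
      have h3 : (0:ℝ) < ((m:ℝ)+2) * ((k:ℝ)+1) + (m:ℝ) + 1 := by nlinarith
      rw [show ((m:ℝ)+2) * ((k:ℝ)+1) + ((m:ℝ)+2) - 1 = ((m:ℝ)+2) * ((k:ℝ)+1) + (m:ℝ) + 1 by ring]
      field_simp
      ring
    rw [ha, hb]
    have hQb := Qfrac Q hQ1 hQM1 hQM2 m k
    have hQa := Qfrac Q hQ1 hQM1 hQM2 m (k+1)
    have hapos : (0:ℝ) < (((k+1:ℕ):ℝ) + 1) / (((m:ℝ) + 2) * ((k+1:ℕ):ℝ) + (m:ℝ) + 1) := by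
      push_cast; positivity
    have hableq : (((k+1:ℕ):ℝ) + 1) / (((m:ℝ) + 2) * ((k+1:ℕ):ℝ) + (m:ℝ) + 1)
        ≤ ((k:ℝ) + 1) / (((m:ℝ) + 2) * k + (m:ℝ) + 1) := by
      push_cast
      rw [div_le_div_iff₀ (by nlinarith) (by nlinarith)]
      nlinarith
    have hble1 : ((k:ℝ) + 1) / (((m:ℝ) + 2) * k + (m:ℝ) + 1) ≤ 1 := by
      rw [div_le_one (by nlinarith)]; nlinarith
    rw [measure_Icc_of_dist μ Q hQcont hQmono hQ0 hdist _ _ hapos hableq hble1,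
      hQb, hQa]
    have hval : (1/2:ℝ) ^ (m+1) * (1 + (1/2:ℝ) ^ k)
        - (1/2:ℝ) ^ (m+1) * (1 + (1/2:ℝ) ^ (k+1)) = (1/2:ℝ) ^ (m + 2 + k) := by
      ring
    rw [hval]
    rw [ENNReal.ofReal_pow (by norm_num)]
    congr 1
    rw [one_div, ENNReal.ofReal_inv_of_pos (by norm_num), ENNReal.ofReal_ofNat, one_div]
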